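/- (SISO per-path Fisher block) For the SISO model, fix a path l and suppose the within-path orthogonality ṡ_l^T s_l = 0 holds. Then the 3×3 block of I_{ψ,SISO} corresponding to the parameters (τ_l, α_l^R, α_l^I) of path l is the diagonal matrix (2/σ_w²) · diag( |α_l|² ‖ṡ_l‖², ‖s_l‖², ‖s_l‖² ). Moreover, if α_l ≠ 0, ‖s_l‖ > 0 and ‖ṡ_l‖ > 0, the quadratic form of the inverse block with the per-path gradient vector g_l(f) = ( −j2πf α_l e^{−j2πfτ_l}, e^{−j2πfτ_l}, j e^{−j2πfτ_l} ) equals g_l(f)^H I_l^{−1} g_l(f) = (σ_w²/‖s_l‖²) · ( 1 + (1/2)(f/σ_F)² ), where σ_F² = ‖ṡ_l‖²/((2π)²‖s_l‖²). -/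

import Mathlib

open MeasureTheory ProbabilityTheory Complex Matrix
open scoped Real

noncomputable section

/-- SISO parameter space `ψ ∈ ℝ^{3L}`: delays `τ`, real gains `α^R`,
imaginary gains `α^I`. -/
abbrev PSiso (L : ℕ) := (Fin L → ℝ) × (Fin L → ℝ) × (Fin L → ℝ)

/-- Index set for the `3L` real parameters. -/
abbrev IdxS (L : ℕ) := Fin L ⊕ Fin L ⊕ Fin L

/-- Canonical basis direction of parameter `u`. -/
def basisS {L : ℕ} : IdxS L → PSiso L
  | Sum.inl l => (Pi.single l 1, 0, 0)
  | Sum.inr (Sum.inl l) => (0, Pi.single l 1, 0)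
  | Sum.inr (Sum.inr l) => (0, 0, Pi.single l 1)

/-- Complex gain `α_l = α_l^R + j α_l^I` of path `l`. -/
def gainS {L : ℕ} (ψ : PSiso L) (l : Fin L) : ℂ := ψ.2.1 l + ψ.2.2 l * Complex.I

/-- SISO noiseless received signal `μ_n(ψ) = Σ_l α_l s(nT_s − τ_l)`. -/
def μS {L N : ℕ} (s : ℝ → ℝ) (Ts : ℝ) (n : Fin N) (ψ : PSiso L) : ℂ :=
  ∑ l, gainS ψ l * (Complex.ofReal (s ((n : ℕ) * Ts - ψ.1 l)))

/-- SISO Fisher information matrix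
`[I_{ψ,SISO}]_{u,v} = (2/σ_w²) Σ_n Re{(∂μ_n/∂ψ_u)^* (∂μ_n/∂ψ_v)}`. -/
def FisherS {L N : ℕ} (s : ℝ → ℝ) (Ts σw : ℝ) (ψ : PSiso L) :
    Matrix (IdxS L) (IdxS L) ℝ :=
  Matrix.of fun u v => (2 / σw ^ 2) * ∑ n : Fin N,
    ((starRingEnd ℂ) (fderiv ℝ (μS s Ts n) ψ (basisS u)) *
      fderiv ℝ (μS s Ts n) ψ (basisS v)).re

/-- Sampled pulse vector `s_l = (s(nT_s − τ_l))_n`. -/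
def sVS {L : ℕ} (N : ℕ) (s : ℝ → ℝ) (Ts : ℝ) (ψ : PSiso L) (l : Fin L) : Fin N → ℝ :=
  fun n => s ((n : ℕ) * Ts - ψ.1 l)

/-- Sampled pulse-derivative vector `ṡ_l = (ṡ(nT_s − τ_l))_n`. -/
def sdVS {L : ℕ} (N : ℕ) (s : ℝ → ℝ) (Ts : ℝ) (ψ : PSiso L) (l : Fin L) : Fin N → ℝ :=
  fun n => deriv s ((n : ℕ) * Ts - ψ.1 l)

/-- Real inner product `x^T y` of real vectors. -/
def rip {k : ℕ} (x y : Fin k → ℝ) : ℝ := ∑ i, x i * y i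

/-- Gradient vector `g_{f,ψ}` of `H(f,ψ) = Σ_l α_l e^{−j2πfτ_l}` with respect to
the `3L` parameters. -/
def gVecS {L : ℕ} (f : ℝ) (ψ : PSiso L) : IdxS L → ℂ
  | Sum.inl l => -(Complex.I * (2 * π * f)) * gainS ψ l *
      Complex.exp (-(Complex.I * (2 * π * f * ψ.1 l)))
  | Sum.inr (Sum.inl l) => Complex.exp (-(Complex.I * (2 * π * f * ψ.1 l)))
  | Sum.inr (Sum.inr l) => Complex.I * Complex.exp (-(Complex.I * (2 * π * f * ψ.1 l)))

/-- The path to which a SISO parameter index belongs. -/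
def pathOfS {L : ℕ} : IdxS L → Fin L
  | Sum.inl l => l
  | Sum.inr (Sum.inl l) => l
  | Sum.inr (Sum.inr l) => l

@[fun_prop] private lemma diff_ofReal' : Differentiable ℝ (Complex.ofReal) := ofRealCLM.differentiable

private lemma diff_μS {L N : ℕ} (s : ℝ → ℝ) (Ts : ℝ) (hs : Differentiable ℝ s) (n : Fin N) :
    Differentiable ℝ (μS (L := L) s Ts n) := by
  unfold μS gainS; fun_prop

private lemma fderiv_μS_tau {L N : ℕ} (s : ℝ → ℝ) (Ts : ℝ) (hs : Differentiable ℝ s)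
    (n : Fin N) (ψ : PSiso L) (l : Fin L) :
    fderiv ℝ (μS s Ts n) ψ (basisS (Sum.inl l)) =
      -(gainS ψ l * (deriv s ((n:ℕ) * Ts - ψ.1 l) : ℝ)) := by
  rw [← ((diff_μS s Ts hs n) ψ).lineDeriv_eq_fderiv]
  have key : (fun t : ℝ => μS s Ts n (ψ + t • basisS (Sum.inl l))) =
      fun t : ℝ => ∑ l', gainS ψ l' *
        (Complex.ofReal (s ((n:ℕ) * Ts - (ψ.1 l' + t * (Pi.single l 1 : Fin L → ℝ) l')))) := by
    funext t
    simp [μS, basisS, gainS, Prod.fst_add, Prod.snd_add]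
  rw [lineDeriv, key]
  have hterm : ∀ l' : Fin L, HasDerivAt (fun t : ℝ => gainS ψ l' *
        (Complex.ofReal (s ((n:ℕ) * Ts - (ψ.1 l' + t * (Pi.single l 1 : Fin L → ℝ) l')))))
      (gainS ψ l' * (-(deriv s ((n:ℕ) * Ts - ψ.1 l') * (Pi.single l 1 : Fin L → ℝ) l') : ℝ)) 0 := by
    intro l'
    have h1 : HasDerivAt (fun t : ℝ => (n:ℕ) * Ts - (ψ.1 l' + t * (Pi.single l 1 : Fin L → ℝ) l'))
        (-((Pi.single l 1 : Fin L → ℝ) l')) 0 :=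
      by simpa using (((hasDerivAt_id (0:ℝ)).mul_const ((Pi.single l 1 : Fin L → ℝ) l')).const_add (ψ.1 l')).const_sub ((n:ℕ) * Ts)
    have h2 := ((hs _).hasDerivAt.comp 0 h1)
    simp only [Function.comp_def, zero_mul, add_zero] at h2
    have h3 := h2.ofReal_comp.const_mul (gainS ψ l')
    convert h3 using 1
    · rfl
    · exact congrArg (fun x : ℝ => gainS ψ l' * (x : ℂ)) (by ring)
  have hsum : HasDerivAt (fun t : ℝ => ∑ l' : Fin L, gainS ψ l' *
        (Complex.ofReal (s ((n:ℕ) * Ts - (ψ.1 l' + t * (Pi.single l 1 : Fin L → ℝ) l')))))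
      (∑ l' : Fin L, gainS ψ l' *
        (-(deriv s ((n:ℕ) * Ts - ψ.1 l') * (Pi.single l 1 : Fin L → ℝ) l') : ℝ)) 0 :=
    HasDerivAt.fun_sum (fun l' _ => hterm l')
  rw [hsum.deriv]
  rw [Finset.sum_eq_single l]
  · simp
  · intro b _ hb
    simp [Pi.single_apply, hb]
  · simp

private lemma fderiv_μS_R {L N : ℕ} (s : ℝ → ℝ) (Ts : ℝ) (hs : Differentiable ℝ s)
    (n : Fin N) (ψ : PSiso L) (l : Fin L) :
    fderiv ℝ (μS s Ts n) ψ (basisS (Sum.inr (Sum.inl l))) =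
      (s ((n:ℕ) * Ts - ψ.1 l) : ℝ) := by
  rw [← ((diff_μS s Ts hs n) ψ).lineDeriv_eq_fderiv]
  have key : (fun t : ℝ => μS s Ts n (ψ + t • basisS (Sum.inr (Sum.inl l)))) =
      fun t : ℝ => ∑ l', (((ψ.2.1 l' + t * (Pi.single l 1 : Fin L → ℝ) l' : ℝ) : ℂ)
        + (ψ.2.2 l' : ℂ) * Complex.I) *
        (Complex.ofReal (s ((n:ℕ) * Ts - ψ.1 l'))) := by
    funext t
    simp [μS, basisS, gainS, Prod.fst_add, Prod.snd_add]
  rw [lineDeriv, key]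
  have hterm : ∀ l' : Fin L, HasDerivAt (fun t : ℝ =>
        (((ψ.2.1 l' + t * (Pi.single l 1 : Fin L → ℝ) l' : ℝ) : ℂ)
          + (ψ.2.2 l' : ℂ) * Complex.I) * (Complex.ofReal (s ((n:ℕ) * Ts - ψ.1 l'))))
      ((((Pi.single l 1 : Fin L → ℝ) l' : ℝ) : ℂ) * (s ((n:ℕ) * Ts - ψ.1 l') : ℝ)) 0 := by
    intro l'
    have h1 : HasDerivAt (fun t : ℝ => ψ.2.1 l' + t * (Pi.single l 1 : Fin L → ℝ) l')
        ((Pi.single l 1 : Fin L → ℝ) l') 0 := by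
      simpa using ((hasDerivAt_id (0:ℝ)).mul_const ((Pi.single l 1 : Fin L → ℝ) l')).const_add (ψ.2.1 l')
    exact ((h1.ofReal_comp.add_const ((ψ.2.2 l' : ℂ) * Complex.I)).mul_const _)
  have hsum : HasDerivAt (fun t : ℝ => ∑ l', (((ψ.2.1 l' + t * (Pi.single l 1 : Fin L → ℝ) l' : ℝ) : ℂ)
        + (ψ.2.2 l' : ℂ) * Complex.I) * (Complex.ofReal (s ((n:ℕ) * Ts - ψ.1 l'))))
      (∑ l' : Fin L, (((Pi.single l 1 : Fin L → ℝ) l' : ℝ) : ℂ) * (s ((n:ℕ) * Ts - ψ.1 l') : ℝ)) 0 :=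
    HasDerivAt.fun_sum (fun l' _ => hterm l')
  rw [hsum.deriv]
  rw [Finset.sum_eq_single l]
  · simp
  · intro b _ hb
    simp [Pi.single_apply, hb]
  · simp

private lemma fderiv_μS_I {L N : ℕ} (s : ℝ → ℝ) (Ts : ℝ) (hs : Differentiable ℝ s)
    (n : Fin N) (ψ : PSiso L) (l : Fin L) :
    fderiv ℝ (μS s Ts n) ψ (basisS (Sum.inr (Sum.inr l))) =
      Complex.I * (s ((n:ℕ) * Ts - ψ.1 l) : ℝ) := by
  rw [← ((diff_μS s Ts hs n) ψ).lineDeriv_eq_fderiv]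
  have key : (fun t : ℝ => μS s Ts n (ψ + t • basisS (Sum.inr (Sum.inr l)))) =
      fun t : ℝ => ∑ l', ((ψ.2.1 l' : ℂ)
        + ((ψ.2.2 l' + t * (Pi.single l 1 : Fin L → ℝ) l' : ℝ) : ℂ) * Complex.I) *
        (Complex.ofReal (s ((n:ℕ) * Ts - ψ.1 l'))) := by
    funext t
    simp [μS, basisS, gainS, Prod.fst_add, Prod.snd_add]
  rw [lineDeriv, key]
  have hterm : ∀ l' : Fin L, HasDerivAt (fun t : ℝ =>
        ((ψ.2.1 l' : ℂ) + ((ψ.2.2 l' + t * (Pi.single l 1 : Fin L → ℝ) l' : ℝ) : ℂ) * Complex.I)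
          * (Complex.ofReal (s ((n:ℕ) * Ts - ψ.1 l'))))
      ((((Pi.single l 1 : Fin L → ℝ) l' : ℝ) : ℂ) * Complex.I * (s ((n:ℕ) * Ts - ψ.1 l') : ℝ)) 0 := by
    intro l'
    have h1 : HasDerivAt (fun t : ℝ => ψ.2.2 l' + t * (Pi.single l 1 : Fin L → ℝ) l')
        ((Pi.single l 1 : Fin L → ℝ) l') 0 := by
      simpa using ((hasDerivAt_id (0:ℝ)).mul_const ((Pi.single l 1 : Fin L → ℝ) l')).const_add (ψ.2.2 l')
    exact (((h1.ofReal_comp.mul_const Complex.I).const_add ((ψ.2.1 l' : ℂ))).mul_const _)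
  have hsum : HasDerivAt (fun t : ℝ => ∑ l', ((ψ.2.1 l' : ℂ)
        + ((ψ.2.2 l' + t * (Pi.single l 1 : Fin L → ℝ) l' : ℝ) : ℂ) * Complex.I) *
        (Complex.ofReal (s ((n:ℕ) * Ts - ψ.1 l'))))
      (∑ l' : Fin L, (((Pi.single l 1 : Fin L → ℝ) l' : ℝ) : ℂ) * Complex.I * (s ((n:ℕ) * Ts - ψ.1 l') : ℝ)) 0 :=
    HasDerivAt.fun_sum (fun l' _ => hterm l')
  rw [hsum.deriv]
  rw [Finset.sum_eq_single l]
  · simp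
  · intro b _ hb
    simp [Pi.single_apply, hb]
  · simp

def DvS {L : ℕ} (N : ℕ) (s : ℝ → ℝ) (Ts : ℝ) (ψ : PSiso L) : IdxS L → Fin N → ℂ
  | Sum.inl l => fun n => -(gainS ψ l * (deriv s ((n:ℕ) * Ts - ψ.1 l) : ℝ))
  | Sum.inr (Sum.inl l) => fun n => ((s ((n:ℕ) * Ts - ψ.1 l) : ℝ) : ℂ)
  | Sum.inr (Sum.inr l) => fun n => Complex.I * (s ((n:ℕ) * Ts - ψ.1 l) : ℝ)

lemma fderiv_μS_eq {L N : ℕ} (s : ℝ → ℝ) (Ts : ℝ) (hs : Differentiable ℝ s)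
    (n : Fin N) (ψ : PSiso L) (w : IdxS L) :
    fderiv ℝ (μS s Ts n) ψ (basisS w) = DvS N s Ts ψ w n := by
  rcases w with l | l | l
  · exact fderiv_μS_tau s Ts hs n ψ l
  · exact fderiv_μS_R s Ts hs n ψ l
  · exact fderiv_μS_I s Ts hs n ψ l

lemma fisherS_eq {L N : ℕ} (s : ℝ → ℝ) (Ts σw : ℝ) (hs : Differentiable ℝ s)
    (ψ : PSiso L) (u v : IdxS L) :
    FisherS (N := N) s Ts σw ψ u v = (2 / σw ^ 2) * ∑ n : Fin N,
      ((starRingEnd ℂ) (DvS N s Ts ψ u n) * DvS N s Ts ψ v n).re := by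
  simp only [FisherS, Matrix.of_apply, fderiv_μS_eq s Ts hs _ ψ]

/-- SISO per-path Fisher block: under the within-path
orthogonality `ṡ_l^T s_l = 0`, the 3×3 Fisher block of path `l` is
`(2/σ_w²) diag(|α_l|²‖ṡ_l‖², ‖s_l‖², ‖s_l‖²)`; moreover, if `α_l ≠ 0`,
`‖s_l‖ > 0` and `‖ṡ_l‖ > 0`, then
`g_l(f)^H I_l⁻¹ g_l(f) = (σ_w²/‖s_l‖²)(1 + (1/2)(f/σ_F)²)`. -/
theorem stmt_16 {L N : ℕ} (s : ℝ → ℝ) (Ts σw f : ℝ)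
    (hs : Differentiable ℝ s) (ψ : PSiso L) (l : Fin L)
    (horth : rip (sdVS N s Ts ψ l) (sVS N s Ts ψ l) = 0) :
    -- the 3×3 block of I_{ψ,SISO} for path l is diagonal
    (FisherS (N := N) s Ts σw ψ (Sum.inl l) (Sum.inl l) =
      (2 / σw ^ 2) * (Complex.normSq (gainS ψ l) *
        rip (sdVS N s Ts ψ l) (sdVS N s Ts ψ l))) ∧
    (FisherS (N := N) s Ts σw ψ (Sum.inr (Sum.inl l)) (Sum.inr (Sum.inl l)) =
      (2 / σw ^ 2) * rip (sVS N s Ts ψ l) (sVS N s Ts ψ l)) ∧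
    (FisherS (N := N) s Ts σw ψ (Sum.inr (Sum.inr l)) (Sum.inr (Sum.inr l)) =
      (2 / σw ^ 2) * rip (sVS N s Ts ψ l) (sVS N s Ts ψ l)) ∧
    (∀ u v : IdxS L, pathOfS u = l → pathOfS v = l → u ≠ v →
      FisherS (N := N) s Ts σw ψ u v = 0) ∧
    -- quadratic form of the inverse block with the per-path gradient
    (gainS ψ l ≠ 0 → 0 < rip (sVS N s Ts ψ l) (sVS N s Ts ψ l) →
      0 < rip (sdVS N s Ts ψ l) (sdVS N s Ts ψ l) → σw ≠ 0 →
      ∀ (Il : Matrix (Fin 3) (Fin 3) ℝ) (g : Fin 3 → ℂ) (σF2 : ℝ),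
        Il = Matrix.diagonal
          ![(2 / σw ^ 2) * Complex.normSq (gainS ψ l) * rip (sdVS N s Ts ψ l) (sdVS N s Ts ψ l),
            (2 / σw ^ 2) * rip (sVS N s Ts ψ l) (sVS N s Ts ψ l),
            (2 / σw ^ 2) * rip (sVS N s Ts ψ l) (sVS N s Ts ψ l)] →
        g = ![-(Complex.I * (2 * π * f)) * gainS ψ l *
                Complex.exp (-(Complex.I * (2 * π * f * ψ.1 l))),
              Complex.exp (-(Complex.I * (2 * π * f * ψ.1 l))),
              Complex.I * Complex.exp (-(Complex.I * (2 * π * f * ψ.1 l)))] →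
        σF2 = rip (sdVS N s Ts ψ l) (sdVS N s Ts ψ l) /
          ((2 * π) ^ 2 * rip (sVS N s Ts ψ l) (sVS N s Ts ψ l)) →
        (∑ u : Fin 3, ∑ v : Fin 3,
            (starRingEnd ℂ) (g u) * ((Il⁻¹ u v : ℝ) : ℂ) * g v).re =
          (σw ^ 2 / rip (sVS N s Ts ψ l) (sVS N s Ts ψ l)) *
            (1 + (1 / 2) * (f ^ 2 / σF2))) := by
  classical
  have hfe := fisherS_eq (N := N) s Ts σw hs ψ
  have hτ : ∀ l' : Fin L, DvS N s Ts ψ (Sum.inl l') =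
      fun n => -(gainS ψ l' * (sdVS N s Ts ψ l' n : ℝ)) := fun _ => rfl
  have hR : ∀ l' : Fin L, DvS N s Ts ψ (Sum.inr (Sum.inl l')) =
      fun n => ((sVS N s Ts ψ l' n : ℝ) : ℂ) := fun _ => rfl
  have hI : ∀ l' : Fin L, DvS N s Ts ψ (Sum.inr (Sum.inr l')) =
      fun n => Complex.I * ((sVS N s Ts ψ l' n : ℝ) : ℂ) := fun _ => rfl
  refine ⟨?_, ?_, ?_, ?_, ?_⟩
  · rw [hfe]
    congr 1
    rw [rip, Finset.mul_sum]
    refine Finset.sum_congr rfl fun n _ => ?_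
    simp only [hτ]
    simp only [_root_.map_neg, _root_.map_mul, Complex.conj_ofReal]
    simp only [neg_mul, mul_neg, neg_neg, Complex.mul_re, Complex.mul_im,
      Complex.conj_re, Complex.conj_im, Complex.ofReal_re, Complex.ofReal_im,
      Complex.normSq_apply, mul_zero, zero_mul, sub_zero, add_zero, zero_add, neg_zero]
    ring
  · rw [hfe]
    congr 1
    rw [rip]
    refine Finset.sum_congr rfl fun n _ => ?_
    simp only [hR, Complex.conj_ofReal, ← Complex.ofReal_mul, Complex.ofReal_re]
  · rw [hfe]
    congr 1
    rw [rip]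
    refine Finset.sum_congr rfl fun n _ => ?_
    simp only [hI]
    simp only [_root_.map_mul, Complex.conj_ofReal, Complex.conj_I]
    simp only [Complex.mul_re, Complex.mul_im, Complex.I_re, Complex.I_im,
      Complex.ofReal_re, Complex.ofReal_im, Complex.neg_re, Complex.neg_im]
    ring
  · have case_τR : FisherS (N := N) s Ts σw ψ (Sum.inl l) (Sum.inr (Sum.inl l)) = 0 := by
      rw [hfe]
      have h : ∑ n : Fin N, ((starRingEnd ℂ) (DvS N s Ts ψ (Sum.inl l) n) *
          DvS N s Ts ψ (Sum.inr (Sum.inl l)) n).re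
          = (-(gainS ψ l).re) * rip (sdVS N s Ts ψ l) (sVS N s Ts ψ l) := by
        rw [rip, Finset.mul_sum]
        refine Finset.sum_congr rfl fun n _ => ?_
        simp only [hτ, hR]
        simp only [_root_.map_neg, _root_.map_mul, Complex.conj_ofReal]
        simp only [neg_mul, Complex.neg_re, Complex.mul_re, Complex.ofReal_re,
          Complex.ofReal_im, Complex.conj_re, Complex.conj_im, mul_zero, sub_zero]
        ring
      rw [h, horth, mul_zero, mul_zero]
    have case_τI : FisherS (N := N) s Ts σw ψ (Sum.inl l) (Sum.inr (Sum.inr l)) = 0 := by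
      rw [hfe]
      have h : ∑ n : Fin N, ((starRingEnd ℂ) (DvS N s Ts ψ (Sum.inl l) n) *
          DvS N s Ts ψ (Sum.inr (Sum.inr l)) n).re
          = (-(gainS ψ l).im) * rip (sdVS N s Ts ψ l) (sVS N s Ts ψ l) := by
        rw [rip, Finset.mul_sum]
        refine Finset.sum_congr rfl fun n _ => ?_
        simp only [hτ, hI]
        simp only [_root_.map_neg, _root_.map_mul, Complex.conj_ofReal]
        simp only [neg_mul, Complex.neg_re, Complex.mul_re, Complex.mul_im,
          Complex.I_re, Complex.I_im, Complex.ofReal_re, Complex.ofReal_im,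
          Complex.conj_re, Complex.conj_im, mul_zero, zero_mul, sub_zero, add_zero,
          zero_add, mul_one, zero_sub, sub_self]
        ring
      rw [h, horth, mul_zero, mul_zero]
    have case_Rτ : FisherS (N := N) s Ts σw ψ (Sum.inr (Sum.inl l)) (Sum.inl l) = 0 := by
      rw [hfe]
      have h : ∑ n : Fin N, ((starRingEnd ℂ) (DvS N s Ts ψ (Sum.inr (Sum.inl l)) n) *
          DvS N s Ts ψ (Sum.inl l) n).re
          = (-(gainS ψ l).re) * rip (sdVS N s Ts ψ l) (sVS N s Ts ψ l) := by
        rw [rip, Finset.mul_sum]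
        refine Finset.sum_congr rfl fun n _ => ?_
        simp only [hτ, hR, Complex.conj_ofReal]
        simp only [mul_neg, Complex.neg_re, Complex.mul_re, Complex.mul_im,
          Complex.ofReal_re, Complex.ofReal_im, mul_zero, zero_mul, sub_zero]
        ring
      rw [h, horth, mul_zero, mul_zero]
    have case_Iτ : FisherS (N := N) s Ts σw ψ (Sum.inr (Sum.inr l)) (Sum.inl l) = 0 := by
      rw [hfe]
      have h : ∑ n : Fin N, ((starRingEnd ℂ) (DvS N s Ts ψ (Sum.inr (Sum.inr l)) n) *
          DvS N s Ts ψ (Sum.inl l) n).re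
          = (-(gainS ψ l).im) * rip (sdVS N s Ts ψ l) (sVS N s Ts ψ l) := by
        rw [rip, Finset.mul_sum]
        refine Finset.sum_congr rfl fun n _ => ?_
        simp only [hτ, hI]
        simp only [_root_.map_mul, Complex.conj_ofReal, Complex.conj_I]
        simp only [mul_neg, neg_mul, Complex.neg_re, Complex.mul_re, Complex.mul_im,
          Complex.I_re, Complex.I_im, Complex.ofReal_re, Complex.ofReal_im,
          mul_zero, zero_mul, sub_zero, add_zero, zero_add, mul_one, zero_sub, neg_neg]
        ring
      rw [h, horth, mul_zero, mul_zero]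
    have case_RI : FisherS (N := N) s Ts σw ψ (Sum.inr (Sum.inl l)) (Sum.inr (Sum.inr l)) = 0 := by
      rw [hfe]
      have h : ∑ n : Fin N, ((starRingEnd ℂ) (DvS N s Ts ψ (Sum.inr (Sum.inl l)) n) *
          DvS N s Ts ψ (Sum.inr (Sum.inr l)) n).re = 0 := by
        refine Finset.sum_eq_zero fun n _ => ?_
        simp only [hR, hI, Complex.conj_ofReal]
        simp [Complex.mul_re, Complex.mul_im]
      rw [h, mul_zero]
    have case_IR : FisherS (N := N) s Ts σw ψ (Sum.inr (Sum.inr l)) (Sum.inr (Sum.inl l)) = 0 := by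
      rw [hfe]
      have h : ∑ n : Fin N, ((starRingEnd ℂ) (DvS N s Ts ψ (Sum.inr (Sum.inr l)) n) *
          DvS N s Ts ψ (Sum.inr (Sum.inl l)) n).re = 0 := by
        refine Finset.sum_eq_zero fun n _ => ?_
        simp only [hR, hI]
        simp [Complex.mul_re, Complex.mul_im]
      rw [h, mul_zero]
    rintro (l1 | l1 | l1) (l2 | l2 | l2) hu hv huv <;>
      simp only [pathOfS] at hu hv
    · exact absurd (by rw [hu, hv]) huv
    · rw [hu, hv]; exact case_τR
    · rw [hu, hv]; exact case_τI
    · rw [hu, hv]; exact case_Rτ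
    · exact absurd (by rw [hu, hv]) huv
    · rw [hu, hv]; exact case_RI
    · rw [hu, hv]; exact case_Iτ
    · rw [hu, hv]; exact case_IR
    · exact absurd (by rw [hu, hv]) huv
  · intro hα hv hd hσ Il g σF2 hIl hg hσF2
    set Sv := rip (sVS N s Ts ψ l) (sVS N s Ts ψ l) with hSv
    set Sd := rip (sdVS N s Ts ψ l) (sdVS N s Ts ψ l) with hSd
    set A := Complex.normSq (gainS ψ l) with hA
    have hA0 : 0 < A := Complex.normSq_pos.2 hα
    have hx : (2 / σw ^ 2) * A * Sd ≠ 0 := by positivity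
    have hy : (2 / σw ^ 2) * Sv ≠ 0 := by positivity
    have hinv : Il⁻¹ = Matrix.diagonal
        ![((2 / σw ^ 2) * A * Sd)⁻¹, ((2 / σw ^ 2) * Sv)⁻¹, ((2 / σw ^ 2) * Sv)⁻¹] := by
      rw [hIl]
      refine Matrix.inv_eq_right_inv ?_
      rw [Matrix.diagonal_mul_diagonal]
      have h1 : (fun i => (![(2 / σw ^ 2) * A * Sd, (2 / σw ^ 2) * Sv, (2 / σw ^ 2) * Sv] i) *
          (![((2 / σw ^ 2) * A * Sd)⁻¹, ((2 / σw ^ 2) * Sv)⁻¹, ((2 / σw ^ 2) * Sv)⁻¹] i))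
          = fun _ : Fin 3 => (1 : ℝ) := by
        funext i
        fin_cases i
        · exact mul_inv_cancel₀ hx
        · exact mul_inv_cancel₀ hy
        · exact mul_inv_cancel₀ hy
      rw [show (Matrix.diagonal fun i =>
          (![(2 / σw ^ 2) * A * Sd, (2 / σw ^ 2) * Sv, (2 / σw ^ 2) * Sv] i) *
          (![((2 / σw ^ 2) * A * Sd)⁻¹, ((2 / σw ^ 2) * Sv)⁻¹, ((2 / σw ^ 2) * Sv)⁻¹] i))
          = Matrix.diagonal (fun _ : Fin 3 => (1:ℝ)) from by rw [h1], Matrix.diagonal_one]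
    set e := Complex.exp (-(Complex.I * (2 * π * f * ψ.1 l))) with he
    have hne : Complex.normSq e = 1 := by
      rw [he, Complex.normSq_eq_norm_sq, Complex.norm_exp]
      have h0 : (-(Complex.I * (2 * π * f * ψ.1 l))).re = 0 := by simp
      rw [h0, Real.exp_zero, one_pow]
    have hg0 : Complex.normSq (g 0) = (2 * π * f) ^ 2 * A := by
      rw [hg]
      show Complex.normSq (-(Complex.I * (2 * π * f)) * gainS ψ l * e) = _
      rw [_root_.map_mul, _root_.map_mul, hne, mul_one, Complex.normSq_neg,
        _root_.map_mul, Complex.normSq_I, one_mul,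
        show ((2 : ℂ) * π * f) = ((2 * π * f : ℝ) : ℂ) by push_cast; ring,
        Complex.normSq_ofReal, ← hA]
      ring
    have hg1 : Complex.normSq (g 1) = 1 := by rw [hg]; exact hne
    have hg2 : Complex.normSq (g 2) = 1 := by
      rw [hg]
      show Complex.normSq (Complex.I * e) = 1
      rw [_root_.map_mul, hne, mul_one, Complex.normSq_I]
    have hterm : ∀ (u : Fin 3) (c : ℝ),
        ((starRingEnd ℂ) (g u) * (c : ℂ) * g u).re = c * Complex.normSq (g u) := by
      intro u c
      have h2 : (starRingEnd ℂ) (g u) * (c : ℂ) * g u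
          = (c : ℂ) * ((Complex.normSq (g u) : ℝ) : ℂ) := by
        rw [mul_comm ((starRingEnd ℂ) (g u)) (c : ℂ), mul_assoc,
          mul_comm ((starRingEnd ℂ) (g u)) (g u), Complex.mul_conj]
      rw [h2, ← Complex.ofReal_mul, Complex.ofReal_re]
    have hoff : ∀ u v : Fin 3, u ≠ v → (Il⁻¹ u v : ℝ) = 0 := by
      intro u v huv
      rw [hinv]
      exact Matrix.diagonal_apply_ne _ huv
    have hdiag : ∀ u : Fin 3, (Il⁻¹ u u : ℝ) =
        ![((2 / σw ^ 2) * A * Sd)⁻¹, ((2 / σw ^ 2) * Sv)⁻¹, ((2 / σw ^ 2) * Sv)⁻¹] u := by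
      intro u
      rw [hinv]
      exact Matrix.diagonal_apply_eq _ u
    have hexp : (∑ u : Fin 3, ∑ v : Fin 3,
        (starRingEnd ℂ) (g u) * ((Il⁻¹ u v : ℝ) : ℂ) * g v).re
        = ((2 * π * f) ^ 2 * A) * ((2 / σw ^ 2) * A * Sd)⁻¹
          + ((2 / σw ^ 2) * Sv)⁻¹ + ((2 / σw ^ 2) * Sv)⁻¹ := by
      rw [Fin.sum_univ_three]
      simp only [Fin.sum_univ_three]
      rw [hoff 0 1 (by decide), hoff 0 2 (by decide), hoff 1 0 (by decide),
        hoff 1 2 (by decide), hoff 2 0 (by decide), hoff 2 1 (by decide),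
        hdiag 0, hdiag 1, hdiag 2]
      simp only [Complex.ofReal_zero, mul_zero, zero_mul, add_zero, zero_add,
        Complex.add_re]
      rw [hterm 0 _, hterm 1 _, hterm 2 _, hg0, hg1, hg2]
      simp only [Matrix.cons_val_zero, Matrix.cons_val_one, Matrix.head_cons,
        Matrix.cons_val_two, Matrix.tail_cons, Matrix.head_fin_const]
      ring
    rw [hexp, hσF2]
    have hπ : (π : ℝ) ≠ 0 := Real.pi_ne_zero
    have hσ2 : σw ^ 2 ≠ 0 := pow_ne_zero 2 hσ
    field_simp
    ring

end
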